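/- Consider a single-slot auction with two bidders having identical maximum prices m₁ = m₂ = m and values v₁ = v₂ = v with v > m > r ≥ 0 (r the reserve price). Then there exist exactly two feasible stable matchings with a nonempty assignment (each assigning the slot to one bidder at price m), and no bidder-optimal stable matching exists: there is no feasible stable matching (u*,p*,μ*) with u*_i ≥ u_i for every feasible stable matching (u,p,μ) and every bidder i. -/

import Mathlib

/-- An auction instance: values `v`, maximum prices `m`, reserve prices `r`. -/
structure Auction (I J : Type) where
  v : I → J → ℝ
  m : I → J → ℝ
  r : I → J → ℝ

/-- A matching `(u, p, μ)` is feasible for an auction. -/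
def Feasible {I J : Type} (A : Auction I J) (u : I → ℝ) (p : J → ℝ)
    (μ : I → Option J) : Prop :=
  (∀ i i' j, μ i = some j → μ i' = some j → i = i') ∧
  (∀ i j, μ i = some j → A.r i j ≤ p j ∧ p j ≤ A.m i j ∧ u i + p j = A.v i j) ∧
  (∀ i, μ i = none → u i = 0) ∧
  (∀ j, (∀ i, μ i ≠ some j) → p j = 0) ∧
  (∀ i, 0 ≤ u i) ∧ (∀ j, 0 ≤ p j)

/-- Stability: every bidder-slot pair satisfies one of the three inequalities. -/
def Stable {I J : Type} (A : Auction I J) (u : I → ℝ) (p : J → ℝ) : Prop :=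
  ∀ i j, u i + p j ≥ A.v i j ∨ p j ≥ A.m i j ∨ u i + A.r i j ≥ A.v i j

/-- A blocking pair violates all three stability inequalities. -/
def Blocking {I J : Type} (A : Auction I J) (u : I → ℝ) (p : J → ℝ)
    (i : I) (j : J) : Prop :=
  u i + p j < A.v i j ∧ p j < A.m i j ∧ u i + A.r i j < A.v i j

/-- A bidder-optimal feasible stable matching. -/
def BidderOptimal {I J : Type} (A : Auction I J) (ustar : I → ℝ) (pstar : J → ℝ)
    (μstar : I → Option J) : Prop :=
  Feasible A ustar pstar μstar ∧ Stable A ustar pstar ∧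
  ∀ u p μ, Feasible A u p μ → Stable A u p → ∀ i, u i ≤ ustar i

/-- single slot, two identical bidders: exactly two feasible stable
matchings with nonempty assignment, and no bidder-optimal matching exists. -/
theorem two_stable_no_bidder_optimal (v m r : ℝ) (hr : 0 ≤ r) (hrm : r < m)
    (hmv : m < v) :
    let A : Auction (Fin 2) Unit := ⟨fun _ _ => v, fun _ _ => m, fun _ _ => r⟩
    (∀ i : Fin 2,
        Feasible A (fun i' => if i' = i then v - m else 0) (fun _ => m)
          (fun i' => if i' = i then some () else none) ∧
        Stable A (fun i' => if i' = i then v - m else 0) (fun _ => m)) ∧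
    (∀ (u : Fin 2 → ℝ) (p : Unit → ℝ) (μ : Fin 2 → Option Unit),
        Feasible A u p μ → Stable A u p → (∃ i j, μ i = some j) →
        ∃ i : Fin 2, μ = (fun i' => if i' = i then some () else none) ∧
          u = (fun i' => if i' = i then v - m else 0) ∧ p = fun _ => m) ∧
    ¬ ∃ (ustar : Fin 2 → ℝ) (pstar : Unit → ℝ) (μstar : Fin 2 → Option Unit),
        BidderOptimal A ustar pstar μstar := by
  intro A
  have hmpos : 0 < m := lt_of_le_of_lt hr hrm
  have part1 : ∀ i : Fin 2,
      Feasible A (fun i' => if i' = i then v - m else 0) (fun _ => m)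
        (fun i' => if i' = i then some () else none) ∧
      Stable A (fun i' => if i' = i then v - m else 0) (fun _ => m) := by
    intro i
    constructor
    · refine ⟨?_, ?_, ?_, ?_, ?_, ?_⟩
      · intro a b j ha hb
        by_cases h1 : a = i <;> by_cases h2 : b = i <;> simp [h1, h2] at ha hb ⊢ <;> omega
      · intro a j ha
        have h1 : a = i := by by_contra h; simp [h] at ha
        subst h1
        refine ⟨le_of_lt hrm, le_rfl, by simp [A]⟩
      · intro a ha
        have h1 : ¬ a = i := by by_contra h; simp [h] at ha
        simp [h1]
      · intro j hj
        exact absurd (hj i) (by simp)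
      · intro a; by_cases h1 : a = i <;> simp [h1] <;> linarith
      · intro j; linarith
    · intro a j
      by_cases h1 : a = i
      · left; simp only [h1, if_pos rfl]; show v - m + m ≥ v; linarith
      · right; left; exact le_rfl
  refine ⟨part1, ?_, ?_⟩
  · -- Part 2: uniqueness
    rintro u p μ ⟨hinj, hmat, hun, hslot, hu0, hp0⟩ hst ⟨i, j, hij⟩
    obtain ⟨hr1, hm1, hv1⟩ := hmat i j hij
    have hij' : μ i = some () := by cases j; exact hij
    have hnot : ∀ a : Fin 2, a ≠ i → μ a = none := by
      intro a ha
      cases hμa : μ a with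
      | none => rfl
      | some j' => exact absurd (hinj a i j' hμa (by cases j'; exact hij')) ha
    have hk : ∃ k : Fin 2, k ≠ i := by
      refine ⟨if i = 0 then 1 else 0, ?_⟩; split <;> omega
    obtain ⟨k, hki⟩ := hk
    have huk : u k = 0 := hun k (hnot k hki)
    have hpm : p () = m := by
      rcases hst k () with h | h | h
      · show p () = m
        rw [huk] at h
        exact absurd h (by show ¬ (0 + p () ≥ v); cases j; push_neg; linarith)
      · cases j; linarith [h, hm1]
      · rw [huk] at h; exact absurd h (by show ¬ (0 + r ≥ v); push_neg; linarith)
    have hui : u i = v - m := by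
      have : u i + p () = v := by cases j; exact hv1
      rw [hpm] at this; linarith
    refine ⟨i, ?_, ?_, ?_⟩
    · funext a
      by_cases h1 : a = i
      · simp [h1, hij']
      · simp [h1, hnot a h1]
    · funext a
      by_cases h1 : a = i
      · simp [h1, hui]
      · simp [h1, hun a (hnot a h1)]
    · funext j'; cases j'; exact hpm
  · -- Part 3
    rintro ⟨us, ps, μs, ⟨hinj, hmat, hun, hslot, hu0, hp0⟩, hs, hopt⟩
    have h0 := hopt _ _ _ (part1 0).1 (part1 0).2 0
    have h1 := hopt _ _ _ (part1 1).1 (part1 1).2 1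
    simp at h0 h1
    have hm0 : μs 0 = some () := by
      cases h : μs 0 with
      | none => have := hun 0 h; linarith
      | some j => cases j; rfl
    have hm1 : μs 1 = some () := by
      cases h : μs 1 with
      | none => have := hun 1 h; linarith
      | some j => cases j; rfl
    have : (0 : Fin 2) = 1 := hinj 0 1 () hm0 hm1
    exact absurd this (by omega)
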